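/- Let A be an n×n complex matrix and let m ≥ 1 be an integer. Then A A^{#_m} A = A (i.e., the m-weak core inverse A^{#_m} is an inner inverse of A) if and only if Ind(A) ≤ 1, i.e., rank(A) = rank(A^2). -/

import Mathlib

open Matrix

/-- `X` is the Moore–Penrose inverse of `A` (four Penrose equations). -/
def MoorePenroseOf {n : ℕ} (A X : Matrix (Fin n) (Fin n) ℂ) : Prop :=
  A * X * A = A ∧ X * A * X = X ∧ (A * X)ᴴ = A * X ∧ (X * A)ᴴ = X * A

/-- Column space of a square complex matrix. -/
noncomputable def colSpace {n : ℕ} (A : Matrix (Fin n) (Fin n) ℂ) : Submodule ℂ (Fin n → ℂ) :=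
  LinearMap.range A.mulVecLin

/-- Null space of a square complex matrix. -/
noncomputable def nullSpace {n : ℕ} (A : Matrix (Fin n) (Fin n) ℂ) : Submodule ℂ (Fin n → ℂ) :=
  LinearMap.ker A.mulVecLin

/-- `k` is the index of `A`: the smallest nonnegative integer with
`rank(A^k) = rank(A^(k+1))`. -/
def HasIndex {n : ℕ} (A : Matrix (Fin n) (Fin n) ℂ) (k : ℕ) : Prop :=
  (A ^ k).rank = (A ^ (k + 1)).rank ∧ ∀ j < k, (A ^ j).rank ≠ (A ^ (j + 1)).rank

/-- `X` is the core-EP inverse of `A` (where `k = Ind(A)`): `XAX = X` and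
`R(X) = R(Xᴴ) = R(A^k)`. -/
def IsCoreEP {n : ℕ} (A X : Matrix (Fin n) (Fin n) ℂ) (k : ℕ) : Prop :=
  X * A * X = X ∧ colSpace X = colSpace (A ^ k) ∧ colSpace Xᴴ = colSpace (A ^ k)

/- ### Auxiliary lemmas -/

lemma colSpace_mul {n : ℕ} (A B : Matrix (Fin n) (Fin n) ℂ) :
    colSpace (A * B) = Submodule.map A.mulVecLin (colSpace B) := by
  rw [colSpace, colSpace, Matrix.mulVecLin_mul, LinearMap.range_comp]

lemma colSpace_mul_le {n : ℕ} (A B : Matrix (Fin n) (Fin n) ℂ) :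
    colSpace (A * B) ≤ colSpace A := by
  rw [colSpace_mul]; exact LinearMap.map_le_range

lemma rank_eq_finrank_colSpace {n : ℕ} (A : Matrix (Fin n) (Fin n) ℂ) :
    A.rank = Module.finrank ℂ (colSpace A) := rfl

lemma exists_factor {n : ℕ} {A G : Matrix (Fin n) (Fin n) ℂ}
    (h : colSpace A ≤ colSpace G) : ∃ C, A = G * C := by
  choose c hc using fun j => h (LinearMap.mem_range_self A.mulVecLin (Pi.single j 1))
  refine ⟨Matrix.of (fun i j => c j i), ?_⟩
  ext i j
  have h1 := congrFun (hc j) i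
  simp only [Matrix.mulVecLin_apply, Matrix.mulVec_single_one, Matrix.col_apply] at h1
  rw [Matrix.mul_apply]
  simp only [Matrix.of_apply]
  rw [← h1]
  rfl

lemma fix_of_colSpace_le {n : ℕ} {E A : Matrix (Fin n) (Fin n) ℂ}
    (hE : E * E = E) (h : colSpace A ≤ colSpace E) : E * A = A := by
  obtain ⟨C, rfl⟩ := exists_factor h
  rw [← mul_assoc, hE]

/-- `A A^{#_m} A = A` iff `Ind(A) ≤ 1`, i.e. `rank A = rank A²`. -/
theorem stmt_15 {n k m : ℕ} (hm : 1 ≤ m)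
    (A CEP AmDag : Matrix (Fin n) (Fin n) ℂ)
    (hInd : HasIndex A k)
    (hCEP : IsCoreEP A CEP k)
    (hMP : MoorePenroseOf (A ^ m) AmDag) :
    A * (CEP ^ (m + 1) * A ^ m * (A ^ m * AmDag)) * A = A ↔
      A.rank = (A ^ 2).rank := by
  obtain ⟨hXAX, hcolX, hcolXH⟩ := hCEP
  set X := CEP with hXdef
  constructor
  · intro hEq
    have hAA : (A ^ 2).rank ≤ A.rank := by
      rw [pow_two]; exact Matrix.rank_mul_le_left A A
    rcases Nat.eq_zero_or_pos k with hk | hk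
    · -- k = 0 : A has full rank
      subst hk
      have h1 : (1 : Matrix (Fin n) (Fin n) ℂ).rank = A.rank := by
        simpa using hInd.1
      have hAn : A.rank = n := by
        rw [← h1, Matrix.rank_one, Fintype.card_fin]
      have htop : colSpace A = ⊤ := by
        apply Submodule.eq_top_of_finrank_eq
        rw [← rank_eq_finrank_colSpace, hAn]
        simp [Module.finrank_pi]
      have h2 : colSpace (A ^ 2) = ⊤ := by
        rw [pow_two, colSpace_mul, htop, Submodule.map_top]
        rw [show LinearMap.range A.mulVecLin = colSpace A from rfl, htop]
      rw [rank_eq_finrank_colSpace, rank_eq_finrank_colSpace, htop, h2]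
    · -- k ≥ 1
      obtain ⟨B, hB⟩ := exists_factor (le_of_eq hcolX)
      refine le_antisymm ?_ hAA
      obtain ⟨k', rfl⟩ : ∃ k', k = k' + 1 := ⟨k - 1, (Nat.succ_pred_eq_of_pos hk).symm⟩
      have key : A = A ^ (k' + 2) * (B * (X ^ m * (A ^ m * (A ^ m * (AmDag * A))))) := by
        conv_lhs => rw [← hEq]
        rw [pow_succ' X m, hB]
        rw [show A ^ (k' + 2) = A * A ^ (k' + 1) from pow_succ' A (k' + 1)]
        simp only [mul_assoc]
      calc A.rank = (A ^ (k' + 2) * (B * (X ^ m * (A ^ m * (A ^ m * (AmDag * A)))))).rank := by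
            rw [← key]
        _ ≤ (A ^ (k' + 2)).rank := Matrix.rank_mul_le_left _ _
        _ = (A ^ 2 * A ^ k').rank := by rw [← pow_add, show 2 + k' = k' + 2 by omega]
        _ ≤ (A ^ 2).rank := Matrix.rank_mul_le_left _ _
  · intro hr
    -- k ≤ 1
    have hk1 : k ≤ 1 := by
      by_contra h
      push_neg at h
      exact hInd.2 1 h (by simpa [pow_one] using hr)
    -- colSpace A² = colSpace A
    have hc2 : colSpace (A ^ 2) = colSpace A := by
      apply Submodule.eq_of_le_of_finrank_le
      · rw [pow_two]; exact colSpace_mul_le A A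
      · rw [← rank_eq_finrank_colSpace, ← rank_eq_finrank_colSpace, ← hr]
    -- colSpace A^(j+1) = colSpace A for all j
    have hcp : ∀ j : ℕ, colSpace (A ^ (j + 1)) = colSpace A := by
      intro j
      induction j with
      | zero => rw [pow_one]
      | succ j ih =>
        rw [show A ^ (j + 2) = A * A ^ (j + 1) from pow_succ' A (j + 1),
          colSpace_mul, ih, ← colSpace_mul, ← pow_two, hc2]
    -- colSpace A^k = colSpace A
    have hck : colSpace (A ^ k) = colSpace A := by
      interval_cases k
      · have h1 : (1 : Matrix (Fin n) (Fin n) ℂ).rank = A.rank := by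
          simpa using hInd.1
        have hAn : A.rank = n := by
          rw [← h1, Matrix.rank_one, Fintype.card_fin]
        have htop : colSpace A = ⊤ := by
          apply Submodule.eq_top_of_finrank_eq
          rw [← rank_eq_finrank_colSpace, hAn]
          simp [Module.finrank_pi]
        rw [pow_zero, htop]
        apply Submodule.eq_top_of_finrank_eq
        rw [show colSpace (1 : Matrix (Fin n) (Fin n) ℂ) =
            LinearMap.range (1 : Matrix (Fin n) (Fin n) ℂ).mulVecLin from rfl]
        rw [Matrix.mulVecLin_one, LinearMap.range_id]
        simp
      · rw [pow_one]
    have hrXA : colSpace X = colSpace A := hcolX.trans hck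
    -- f1 : X * A * A = A
    have hXAidem : (X * A) * (X * A) = X * A := by
      rw [← mul_assoc, hXAX]
    have hrkXA : X.rank ≤ (X * A).rank := by
      calc X.rank = (X * A * X).rank := by rw [hXAX]
        _ ≤ (X * A).rank := Matrix.rank_mul_le_left _ _
    have hXAcol : colSpace (X * A) = colSpace X :=
      Submodule.eq_of_le_of_finrank_le (colSpace_mul_le X A)
        (by rw [← rank_eq_finrank_colSpace, ← rank_eq_finrank_colSpace]; exact hrkXA)
    have f1 : X * A * A = A :=
      fix_of_colSpace_le hXAidem (le_of_eq (hrXA ▸ hXAcol).symm)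
    -- f2 : A * X * A = A
    have hAXidem : (A * X) * (A * X) = A * X := by
      rw [mul_assoc A X (A * X), ← mul_assoc X A X, hXAX]
    have hrkAX : X.rank ≤ (A * X).rank := by
      calc X.rank = (X * (A * X)).rank := by rw [← mul_assoc, hXAX]
        _ ≤ (A * X).rank := Matrix.rank_mul_le_right _ _
    have hAXcol : colSpace (A * X) = colSpace A :=
      Submodule.eq_of_le_of_finrank_le (colSpace_mul_le A X)
        (by
          rw [← rank_eq_finrank_colSpace, ← rank_eq_finrank_colSpace]
          calc A.rank = X.rank := by
                rw [rank_eq_finrank_colSpace, rank_eq_finrank_colSpace, hrXA]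
            _ ≤ (A * X).rank := hrkAX)
    have f2 : A * X * A = A :=
      fix_of_colSpace_le hAXidem (le_of_eq hAXcol.symm)
    -- f3 : A^m * AmDag * A = A
    have f3 : A ^ m * AmDag * A = A := by
      obtain ⟨m', rfl⟩ : ∃ m', m = m' + 1 := ⟨m - 1, (Nat.succ_pred_eq_of_pos hm).symm⟩
      obtain ⟨C, hC⟩ := exists_factor (le_of_eq (hcp m').symm)
      calc A ^ (m' + 1) * AmDag * A
          = A ^ (m' + 1) * AmDag * (A ^ (m' + 1) * C) := by rw [← hC]
        _ = A ^ (m' + 1) * AmDag * A ^ (m' + 1) * C := by rw [← mul_assoc]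
        _ = A ^ (m' + 1) * C := by rw [hMP.1]
        _ = A := hC.symm
    -- f4 : X^(j+1) * A^(j+1) = X * A
    have f4 : ∀ j : ℕ, X ^ (j + 1) * A ^ (j + 1) = X * A := by
      intro j
      induction j with
      | zero => rw [pow_one, pow_one]
      | succ j ih =>
        calc X ^ (j + 2) * A ^ (j + 2) = X ^ (j + 1) * (X * A * A) * A ^ j := by
              conv_lhs => rw [pow_succ X (j + 1), pow_succ' A (j + 1), pow_succ' A j]
              simp only [mul_assoc]
          _ = X ^ (j + 1) * A * A ^ j := by rw [f1]
          _ = X ^ (j + 1) * A ^ (j + 1) := by rw [mul_assoc, ← pow_succ' A j]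
          _ = X * A := ih
    -- assemble
    calc A * (X ^ (m + 1) * A ^ m * (A ^ m * AmDag)) * A
        = A * (X ^ (m + 1) * (A ^ m * (A ^ m * AmDag * A))) := by
          simp only [mul_assoc]
      _ = A * (X ^ (m + 1) * (A ^ m * A)) := by rw [f3]
      _ = A * (X ^ (m + 1) * A ^ (m + 1)) := by rw [← pow_succ A m]
      _ = A * (X * A) := by rw [f4 m]
      _ = A := by rw [← mul_assoc, f2]
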